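/- Let $K$ be a field, let $B = K[X,Y,Z]$ be the polynomial ring in three variables, and let $A = K[XZ, YZ] \subseteq B$ be the $K$-subalgebra generated by $XZ$ and $YZ$. The ideal $(X, Y^2Z - 1)B$ of $B$ is prime and its contraction to $A$ is the prime ideal of $A$ generated by $XZ$, but there is no prime ideal $\mathfrak{q} \supseteq (X, Y^2Z-1)B$ of $B$ whose contraction to $A$ is the ideal of $A$ generated by $XZ$ and $YZ$. In particular, the inclusion $A \subseteq B$ does not satisfy going up. -/

import Mathlib

open MvPolynomial


theorem Algebra.adjoin_induction' {R A : Type*} [CommSemiring R] [Semiring A] [Algebra R A]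
    {s : Set A} {p : Algebra.adjoin R s → Prop}
    (mem : ∀ (x) (h : x ∈ s), p ⟨x, Algebra.subset_adjoin h⟩)
    (algebraMap : ∀ r, p (algebraMap R _ r)) (add : ∀ x y, p x → p y → p (x + y))
    (mul : ∀ x y, p x → p y → p (x * y)) (x : Algebra.adjoin R s) : p x := by
  obtain ⟨x, hx⟩ := x
  induction hx using Algebra.adjoin_induction with
  | mem x h => exact mem x h
  | algebraMap r => exact algebraMap r
  | add x y hx hy h1 h2 => exact add _ _ h1 h2
  | mul x y hx hy h1 h2 => exact mul _ _ h1 h2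

namespace Stmt15Aux

variable {K : Type*} [Field K]

/-- The "target" ideal. -/
noncomputable abbrev II (K : Type*) [Field K] : Ideal (MvPolynomial (Fin 3) K) :=
  Ideal.span {X 0, X 1 ^ 2 * X 2 - 1}

lemma hX0 : (X 0 : MvPolynomial (Fin 3) K) ∈ II K :=
  Ideal.subset_span (Set.mem_insert _ _)

lemma hgen : (X 1 ^ 2 * X 2 - 1 : MvPolynomial (Fin 3) K) ∈ II K :=
  Ideal.subset_span (Set.mem_insert_iff.2 (Or.inr rfl))

/-- the map sending X0 ↦ 0, X1 ↦ X, X2 ↦ X⁻². -/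
noncomputable def ψ₁ : MvPolynomial (Fin 3) K →ₐ[K] RatFunc K :=
  aeval ![0, RatFunc.X, (RatFunc.X ^ 2)⁻¹]

lemma ψ₁_X0 : ψ₁ (X 0 : MvPolynomial (Fin 3) K) = 0 := by simp [ψ₁]
lemma ψ₁_X1 : ψ₁ (X 1 : MvPolynomial (Fin 3) K) = RatFunc.X := by simp [ψ₁]
lemma ψ₁_X2 : ψ₁ (X 2 : MvPolynomial (Fin 3) K) = (RatFunc.X ^ 2)⁻¹ := by simp [ψ₁]

end Stmt15Aux
namespace Stmt15Aux
variable {K : Type*} [Field K]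

lemma claimC (f : MvPolynomial (Fin 3) K) :
    ∃ (n : ℕ) (p : Polynomial K),
      f * (X 1) ^ (2 * n) - Polynomial.aeval (X (σ := Fin 3) 1) p ∈ II K := by
  induction f using MvPolynomial.induction_on with
  | C a =>
      refine ⟨0, Polynomial.C a, ?_⟩
      simp [MvPolynomial.algebraMap_eq]
  | add f g ihf ihg =>
      obtain ⟨n₁, p₁, h₁⟩ := ihf
      obtain ⟨n₂, p₂, h₂⟩ := ihg
      refine ⟨n₁ + n₂, p₁ * Polynomial.X ^ (2 * n₂) + p₂ * Polynomial.X ^ (2 * n₁), ?_⟩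
      have := Ideal.add_mem _ (Ideal.mul_mem_right ((X 1 : MvPolynomial (Fin 3) K) ^ (2 * n₂)) _ h₁)
        (Ideal.mul_mem_right ((X 1 : MvPolynomial (Fin 3) K) ^ (2 * n₁)) _ h₂)
      convert this using 1
      simp only [map_add, map_mul, map_pow, Polynomial.aeval_X]
      ring
  | mul_X f i ih =>
      obtain ⟨n, p, h⟩ := ih
      fin_cases i
      · refine ⟨0, 0, ?_⟩
        simpa using Ideal.mul_mem_left _ f hX0
      · refine ⟨n, p * Polynomial.X, ?_⟩
        show f * X 1 * (X 1 : MvPolynomial (Fin 3) K) ^ (2 * n) -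
          Polynomial.aeval (X (σ := Fin 3) 1) (p * Polynomial.X) ∈ II K
        have := Ideal.mul_mem_right (X 1 : MvPolynomial (Fin 3) K) _ h
        convert this using 1
        simp only [map_mul, Polynomial.aeval_X]
        ring
      · refine ⟨n + 1, p, ?_⟩
        show f * X 2 * (X 1 : MvPolynomial (Fin 3) K) ^ (2 * (n + 1)) -
          Polynomial.aeval (X (σ := Fin 3) 1) p ∈ II K
        have := Ideal.add_mem _
          (Ideal.mul_mem_right ((X 1 : MvPolynomial (Fin 3) K) ^ 2 * X 2) _ h)
          (Ideal.mul_mem_left _ (Polynomial.aeval (X (σ := Fin 3) 1) p) hgen)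
        convert this using 1
        ring

lemma cancelX1 {f : MvPolynomial (Fin 3) K} {n : ℕ}
    (h : f * (X 1) ^ (2 * n) ∈ II K) : f ∈ II K := by
  obtain ⟨c, hc⟩ := sub_dvd_pow_sub_pow ((X 1 : MvPolynomial (Fin 3) K) ^ 2 * X 2) 1 (2 * n)
  rw [one_pow] at hc
  have key : f = f * (X 1) ^ (2 * n) * ((X 1 : MvPolynomial (Fin 3) K) * X 2) ^ (2 * n)
      - f * (((X 1 : MvPolynomial (Fin 3) K) ^ 2 * X 2) ^ (2 * n) - 1) := by ring
  rw [key, hc]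
  exact Ideal.sub_mem _ (Ideal.mul_mem_right _ _ h)
    (Ideal.mul_mem_left _ _ (Ideal.mul_mem_right _ _ hgen))

lemma II_le_ker_ψ₁ : II K ≤ RingHom.ker (ψ₁ (K := K)).toRingHom := by
  rw [Ideal.span_le]
  rintro x (rfl | rfl)
  · simpa [RingHom.mem_ker] using ψ₁_X0
  · simp only [SetLike.mem_coe, RingHom.mem_ker, AlgHom.toRingHom_eq_coe, RingHom.coe_coe,
      map_sub, map_mul, map_pow, map_one, ψ₁_X1, ψ₁_X2]
    rw [mul_inv_cancel₀ (pow_ne_zero 2 RatFunc.X_ne_zero), sub_self]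

lemma aeval_ratfunc_X (p : Polynomial K) :
    Polynomial.aeval RatFunc.X p = algebraMap (Polynomial K) (RatFunc K) p := by
  have := Polynomial.aeval_algHom_apply
    (IsScalarTower.toAlgHom K (Polynomial K) (RatFunc K)) Polynomial.X p
  simpa [RatFunc.algebraMap_X, Polynomial.aeval_X_left_apply] using this

lemma mem_II_iff {f : MvPolynomial (Fin 3) K} : f ∈ II K ↔ ψ₁ f = 0 := by
  constructor
  · intro h; exact II_le_ker_ψ₁ h
  · intro h
    obtain ⟨n, p, hm⟩ := claimC f
    have h1 : ψ₁ (f * (X 1) ^ (2 * n) - Polynomial.aeval (X (σ := Fin 3) 1) p) = 0 :=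
      II_le_ker_ψ₁ hm
    rw [map_sub, map_mul, map_pow, h, zero_mul, zero_sub, neg_eq_zero,
      ← Polynomial.aeval_algHom_apply ψ₁ (X (σ := Fin 3) 1) p, ψ₁_X1, aeval_ratfunc_X] at h1
    have hp : p = 0 := RatFunc.algebraMap_injective K (by simpa using h1)
    subst hp
    rw [map_zero, sub_zero] at hm
    exact cancelX1 hm

lemma II_isPrime : (II K).IsPrime := by
  have : II K = RingHom.ker (ψ₁ (K := K)).toRingHom := by
    ext f
    rw [RingHom.mem_ker, mem_II_iff]; rfl
  rw [this]
  exact RingHom.ker_isPrime _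

end Stmt15Aux
namespace Stmt15Aux
variable {K : Type*} [Field K]

/-- second map: X0 ↦ 0, X1 ↦ X⁻¹, X2 ↦ X². -/
noncomputable def ψ₂ : MvPolynomial (Fin 3) K →ₐ[K] RatFunc K :=
  aeval ![0, (RatFunc.X)⁻¹, RatFunc.X ^ 2]

lemma ψ₂_X0 : ψ₂ (X 0 : MvPolynomial (Fin 3) K) = 0 := by simp [ψ₂]
lemma ψ₂_X1 : ψ₂ (X 1 : MvPolynomial (Fin 3) K) = (RatFunc.X)⁻¹ := by simp [ψ₂]
lemma ψ₂_X2 : ψ₂ (X 2 : MvPolynomial (Fin 3) K) = RatFunc.X ^ 2 := by simp [ψ₂]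

lemma II_le_ker_ψ₂ : II K ≤ RingHom.ker (ψ₂ (K := K)).toRingHom := by
  rw [Ideal.span_le]
  rintro x (rfl | rfl)
  · simpa [RingHom.mem_ker] using ψ₂_X0
  · simp only [SetLike.mem_coe, RingHom.mem_ker, AlgHom.toRingHom_eq_coe, RingHom.coe_coe,
      map_sub, map_mul, map_pow, map_one, ψ₂_X1, ψ₂_X2]
    rw [inv_pow, inv_mul_cancel₀ (pow_ne_zero 2 RatFunc.X_ne_zero), sub_self]

section Adjoin

variable (u v : (Algebra.adjoin K ({X 0 * X 2, X 1 * X 2} : Set (MvPolynomial (Fin 3) K))))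
  (hu : (u : MvPolynomial (Fin 3) K) = X 0 * X 2)
  (hv : (v : MvPolynomial (Fin 3) K) = X 1 * X 2)

include hu hv in
lemma claimD (a : (Algebra.adjoin K ({X 0 * X 2, X 1 * X 2} : Set (MvPolynomial (Fin 3) K)))) :
    ∃ p : Polynomial K, a - Polynomial.aeval v p ∈ Ideal.span {u} := by
  induction a using Algebra.adjoin_induction' with
  | mem x h =>
      rcases h with h | h
      · refine ⟨0, ?_⟩
        have hx : (⟨x, Algebra.subset_adjoin (by simp [h])⟩ :
            (Algebra.adjoin K ({X 0 * X 2, X 1 * X 2} : Set (MvPolynomial (Fin 3) K)))) = u :=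
          Subtype.ext (h.trans hu.symm)
        rw [hx, map_zero, sub_zero]
        exact Ideal.mem_span_singleton_self u
      · refine ⟨Polynomial.X, ?_⟩
        have hx : (⟨x, Algebra.subset_adjoin (by simp [h])⟩ :
            (Algebra.adjoin K ({X 0 * X 2, X 1 * X 2} : Set (MvPolynomial (Fin 3) K)))) = v :=
          Subtype.ext (h.trans hv.symm)
        rw [hx, Polynomial.aeval_X, sub_self]
        exact Ideal.zero_mem _
  | algebraMap r => exact ⟨Polynomial.C r, by rw [Polynomial.aeval_C, sub_self]; exact Ideal.zero_mem _⟩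
  | add x y hx hy =>
      obtain ⟨p₁, h₁⟩ := hx
      obtain ⟨p₂, h₂⟩ := hy
      refine ⟨p₁ + p₂, ?_⟩
      have := Ideal.add_mem _ h₁ h₂
      convert this using 1
      rw [map_add]; ring
  | mul x y hx hy =>
      obtain ⟨p₁, h₁⟩ := hx
      obtain ⟨p₂, h₂⟩ := hy
      refine ⟨p₁ * p₂, ?_⟩
      have := Ideal.add_mem _ (Ideal.mul_mem_left _ x h₂)
        (Ideal.mul_mem_right (Polynomial.aeval v p₂) _ h₁)
      convert this using 1
      rw [map_mul]; ring

include hu hv in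
lemma claimE (a : (Algebra.adjoin K ({X 0 * X 2, X 1 * X 2} : Set (MvPolynomial (Fin 3) K)))) :
    ∃ c : K, a - algebraMap K _ c ∈ Ideal.span {u, v} := by
  induction a using Algebra.adjoin_induction' with
  | mem x h =>
      refine ⟨0, ?_⟩
      rw [map_zero, sub_zero]
      rcases h with h | h
      · have hx : (⟨x, Algebra.subset_adjoin (by simp [h])⟩ :
            (Algebra.adjoin K ({X 0 * X 2, X 1 * X 2} : Set (MvPolynomial (Fin 3) K)))) = u :=
          Subtype.ext (h.trans hu.symm)
        rw [hx]; exact Ideal.subset_span (Set.mem_insert _ _)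
      · have hx : (⟨x, Algebra.subset_adjoin (by simp [h])⟩ :
            (Algebra.adjoin K ({X 0 * X 2, X 1 * X 2} : Set (MvPolynomial (Fin 3) K)))) = v :=
          Subtype.ext (h.trans hv.symm)
        rw [hx]; exact Ideal.subset_span (Set.mem_insert_iff.2 (Or.inr rfl))
  | algebraMap r => exact ⟨r, by rw [sub_self]; exact Ideal.zero_mem _⟩
  | add x y hx hy =>
      obtain ⟨c₁, h₁⟩ := hx
      obtain ⟨c₂, h₂⟩ := hy
      refine ⟨c₁ + c₂, ?_⟩
      have := Ideal.add_mem _ h₁ h₂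
      convert this using 1
      rw [RingHom.map_add]; ring
  | mul x y hx hy =>
      obtain ⟨c₁, h₁⟩ := hx
      obtain ⟨c₂, h₂⟩ := hy
      refine ⟨c₁ * c₂, ?_⟩
      have := Ideal.add_mem _ (Ideal.mul_mem_left _ x h₂)
        (Ideal.mul_mem_right (algebraMap K _ c₂) _ h₁)
      convert this using 1
      rw [RingHom.map_mul]; ring

end Adjoin
end Stmt15Aux

open Stmt15Aux


set_option synthInstance.maxHeartbeats 2000000 in
set_option maxHeartbeats 2000000 in
/-- `(X, Y²Z - 1)B` is prime and contracts to `(XZ) ⊆ A`, but no prime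
`q ⊇ (X, Y²Z - 1)B` contracts to `(XZ, YZ) ⊆ A`; in particular `A ⊆ B` does not
satisfy going up. -/
theorem stmt_15 (K : Type*) [Field K]
    (A : Subalgebra K (MvPolynomial (Fin 3) K))
    (hA : A = Algebra.adjoin K ({X 0 * X 2, X 1 * X 2} : Set (MvPolynomial (Fin 3) K)))
    (u v : A) (hu : (u : MvPolynomial (Fin 3) K) = X 0 * X 2)
    (hv : (v : MvPolynomial (Fin 3) K) = X 1 * X 2) :
    (Ideal.span {X 0, X 1 ^ 2 * X 2 - 1} : Ideal (MvPolynomial (Fin 3) K)).IsPrime ∧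
    Ideal.comap (algebraMap A (MvPolynomial (Fin 3) K))
        (Ideal.span {X 0, X 1 ^ 2 * X 2 - 1} : Ideal (MvPolynomial (Fin 3) K)) =
      Ideal.span {u} ∧
    (¬ ∃ q : Ideal (MvPolynomial (Fin 3) K), q.IsPrime ∧
        Ideal.span {X 0, X 1 ^ 2 * X 2 - 1} ≤ q ∧
        Ideal.comap (algebraMap A (MvPolynomial (Fin 3) K)) q = Ideal.span {u, v}) ∧
    (¬ ∀ (p p' : Ideal A), p.IsPrime → p'.IsPrime → p < p' →
        ∀ q : Ideal (MvPolynomial (Fin 3) K), q.IsPrime →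
          Ideal.comap (algebraMap A (MvPolynomial (Fin 3) K)) q = p →
          ∃ q' : Ideal (MvPolynomial (Fin 3) K), q'.IsPrime ∧ q ≤ q' ∧
            Ideal.comap (algebraMap A (MvPolynomial (Fin 3) K)) q' = p') := by
  subst hA
  have halg : ∀ a : (Algebra.adjoin K ({X 0 * X 2, X 1 * X 2} : Set (MvPolynomial (Fin 3) K))),
      algebraMap _ (MvPolynomial (Fin 3) K) a = (a : MvPolynomial (Fin 3) K) := fun a => rfl
  have part1 : (II K).IsPrime := II_isPrime
  haveI := part1
  -- span {u} is contained in the contraction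
  have husub : Ideal.span {u} ≤
      Ideal.comap (algebraMap _ (MvPolynomial (Fin 3) K)) (II K) := by
    rw [Ideal.span_le, Set.singleton_subset_iff]
    show u ∈ Ideal.comap (algebraMap _ (MvPolynomial (Fin 3) K)) (II K)
    rw [Ideal.mem_comap, halg, hu]
    exact Ideal.mul_mem_right _ _ hX0
  -- Part 2
  have part2 : Ideal.comap (algebraMap _ (MvPolynomial (Fin 3) K)) (II K) = Ideal.span {u} := by
    apply le_antisymm
    · intro a ha
      rw [Ideal.mem_comap, halg] at ha
      obtain ⟨p, hp⟩ := claimD u v hu hv a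
      have h2 : (algebraMap _ (MvPolynomial (Fin 3) K)) (Polynomial.aeval v p) ∈ II K := by
        have h3 := (II K).sub_mem ha (Ideal.mem_comap.mp (husub hp))
        rw [halg] at *
        simpa using h3
      have h4 : ψ₂ ((Algebra.adjoin K
          ({X 0 * X 2, X 1 * X 2} : Set (MvPolynomial (Fin 3) K))).val
          (Polynomial.aeval v p)) = 0 := by
        exact II_le_ker_ψ₂ h2
      have h5 : Polynomial.aeval ((ψ₂.comp (Algebra.adjoin K
          ({X 0 * X 2, X 1 * X 2} : Set (MvPolynomial (Fin 3) K))).val) v) p = 0 := by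
        rw [Polynomial.aeval_algHom_apply]; exact h4
      have h6 : (ψ₂.comp (Algebra.adjoin K
          ({X 0 * X 2, X 1 * X 2} : Set (MvPolynomial (Fin 3) K))).val) v = RatFunc.X := by
        rw [AlgHom.comp_apply, Subalgebra.coe_val, hv, map_mul, ψ₂_X1, ψ₂_X2, sq,
          inv_mul_cancel_left₀ RatFunc.X_ne_zero]
      rw [h6, aeval_ratfunc_X] at h5
      have hp0 : p = 0 := RatFunc.algebraMap_injective K (by simpa using h5)
      subst hp0
      rw [map_zero, sub_zero] at hp
      exact hp
    · exact husub
  -- Part 3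
  have part3 : (¬ ∃ q : Ideal (MvPolynomial (Fin 3) K), q.IsPrime ∧
      II K ≤ q ∧
      Ideal.comap (algebraMap _ (MvPolynomial (Fin 3) K)) q = Ideal.span {u, v}) := by
    rintro ⟨q, hq, hle, hcom⟩
    have hv_mem : (X 1 * X 2 : MvPolynomial (Fin 3) K) ∈ q := by
      have hm : v ∈ Ideal.comap (algebraMap _ (MvPolynomial (Fin 3) K)) q := by
        rw [hcom]
        exact Ideal.subset_span (Set.mem_insert_iff.2 (Or.inr rfl))
      rw [Ideal.mem_comap, halg, hv] at hm
      exact hm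
    have hg : (X 1 ^ 2 * X 2 - 1 : MvPolynomial (Fin 3) K) ∈ q := hle hgen
    have hone : (1 : MvPolynomial (Fin 3) K) ∈ q := by
      have h := q.sub_mem (q.mul_mem_left (X 1) hv_mem) hg
      convert h using 1
      ring
    exact hq.ne_top ((Ideal.eq_top_iff_one q).mpr hone)
  -- span {u, v} is maximal
  set χ : (Algebra.adjoin K ({X 0 * X 2, X 1 * X 2} :
      Set (MvPolynomial (Fin 3) K))) →ₐ[K] K :=
    (aeval (fun _ => (0 : K))).comp (Algebra.adjoin K
      ({X 0 * X 2, X 1 * X 2} : Set (MvPolynomial (Fin 3) K))).val with hχ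
  have hχu : χ u = 0 := by simp [hχ, hu]
  have hχv : χ v = 0 := by simp [hχ, hv]
  have hsub : Ideal.span {u, v} ≤ RingHom.ker χ.toRingHom := by
    rw [Ideal.span_le]
    rintro x (rfl | rfl)
    · simpa [RingHom.mem_ker] using hχu
    · simpa [RingHom.mem_ker] using hχv
  have hker : Ideal.span {u, v} = RingHom.ker χ.toRingHom := by
    apply le_antisymm hsub
    intro a ha
    rw [RingHom.mem_ker] at ha
    obtain ⟨c, hc⟩ := claimE u v hu hv a
    have h0 : χ (a - algebraMap K _ c) = 0 := hsub hc
    have hc0 : c = 0 := by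
      have h1 : χ a = 0 := ha
      rw [map_sub, AlgHom.commutes, h1, zero_sub, neg_eq_zero,
        Algebra.algebraMap_self_apply] at h0
      exact h0
    rw [hc0, map_zero, sub_zero] at hc
    exact hc
  have hχsurj : Function.Surjective χ.toRingHom := fun c =>
    ⟨algebraMap K _ c, by simpa using χ.commutes c⟩
  have huv_prime : (Ideal.span {u, v} : Ideal _).IsPrime := by
    rw [hker]
    exact (RingHom.ker_isMaximal_of_surjective _ hχsurj).isPrime
  -- span {u} is prime
  have hu_prime : (Ideal.span {u} : Ideal _).IsPrime := part2 ▸ Ideal.IsPrime.comap _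
  -- strict inclusion
  have hne : v ∉ (Ideal.span {u} : Ideal _) := by
    intro hvmem
    rw [← part2, Ideal.mem_comap, halg, hv] at hvmem
    have h0 : ψ₁ (X 1 * X 2 : MvPolynomial (Fin 3) K) = 0 := II_le_ker_ψ₁ hvmem
    rw [map_mul, ψ₁_X1, ψ₁_X2] at h0
    exact (mul_ne_zero (RatFunc.X_ne_zero (K := K))
      (inv_ne_zero (pow_ne_zero 2 RatFunc.X_ne_zero))) h0
  have hlt : (Ideal.span {u} : Ideal _) < Ideal.span {u, v} := by
    refine lt_of_le_of_ne (Ideal.span_mono (Set.singleton_subset_iff.2 (Set.mem_insert _ _))) ?_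
    intro h
    exact hne (h ▸ Ideal.subset_span (Set.mem_insert_iff.2 (Or.inr rfl)))
  refine ⟨part1, part2, part3, ?_⟩
  intro H
  obtain ⟨q', hq', hle', hcom'⟩ := H _ _ hu_prime huv_prime hlt (II K) part1 part2
  exact part3 ⟨q', hq', hle', hcom'⟩
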